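/- Let P = R^n be a free module over a commutative ring R with n ≥ 3, p ∈ P, and φ ∈ P* = Hom(P, R) with φ(p) = 0, where p or φ is unimodular. Then the transvection 1 + φ_p (given by the matrix I_n + v·w^t, where v is the coordinate vector of p and w represents φ) lies in E_n(R). -/

import Mathlib

/-- Elementary generators `e_{ij}(x)`, `x ∈ S`. -/
def elemGens (n : ℕ) (S : Type) [CommRing S] :
    Set (Matrix (Fin n) (Fin n) S)ˣ :=
  {g | ∃ i j : Fin n, i ≠ j ∧ ∃ x : S,
    (g : Matrix (Fin n) (Fin n) S) = 1 + Matrix.single i j x}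

/-- The elementary subgroup `E_n(S)`. -/
def En (n : ℕ) (S : Type) [CommRing S] : Subgroup (Matrix (Fin n) (Fin n) S)ˣ :=
  Subgroup.closure (elemGens n S)

open Matrix Finset

namespace TransvAux

variable {n : ℕ} {R : Type} [CommRing R]

lemma key (a b c d : Fin n → R) :
    vecMulVec a b * vecMulVec c d = (b ⬝ᵥ c) • vecMulVec a d := by
  ext i j
  simp only [mul_apply, vecMulVec_apply, Matrix.smul_apply, dotProduct, smul_eq_mul, Finset.sum_mul]
  exact Finset.sum_congr rfl fun k _ => by ring

/-- The statement that `1 + v wᵀ` is (the value of) an element of `E_n(R)`. -/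
def TE (n : ℕ) (R : Type) [CommRing R] (v w : Fin n → R) : Prop :=
  ∃ g ∈ En n R, (g : Matrix (Fin n) (Fin n) R) = 1 + Matrix.vecMulVec v w

lemma vecMulVec_zero_left (w : Fin n → R) : vecMulVec (0 : Fin n → R) w = 0 := by
  ext i j; simp [vecMulVec_apply]

lemma vecMulVec_zero_right (v : Fin n → R) : vecMulVec v (0 : Fin n → R) = 0 := by
  ext i j; simp [vecMulVec_apply]

lemma vecMulVec_add_left (v v' w : Fin n → R) :
    vecMulVec (v + v') w = vecMulVec v w + vecMulVec v' w := by
  ext i j; simp [vecMulVec_apply, add_mul]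

lemma vecMulVec_add_right (v w w' : Fin n → R) :
    vecMulVec v (w + w') = vecMulVec v w + vecMulVec v w' := by
  ext i j; simp [vecMulVec_apply, mul_add]

lemma dot_sum_right {ι : Type} (w : Fin n → R) (f : ι → Fin n → R) (s : Finset ι) :
    w ⬝ᵥ (∑ k ∈ s, f k) = ∑ k ∈ s, w ⬝ᵥ f k := by
  simp only [dotProduct, Finset.sum_apply, Finset.mul_sum]
  exact Finset.sum_comm

lemma TE_zero_left (w : Fin n → R) : TE n R 0 w :=
  ⟨1, one_mem _, by rw [vecMulVec_zero_left]; simp⟩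

lemma TE_zero_right (v : Fin n → R) : TE n R v 0 :=
  ⟨1, one_mem _, by rw [vecMulVec_zero_right]; simp⟩

lemma TE_add_right {v w w' : Fin n → R} (h1 : TE n R v w) (h2 : TE n R v w')
    (hd : w ⬝ᵥ v = 0) : TE n R v (w + w') := by
  obtain ⟨g1, hg1, he1⟩ := h1
  obtain ⟨g2, hg2, he2⟩ := h2
  refine ⟨g1 * g2, mul_mem hg1 hg2, ?_⟩
  push_cast
  rw [he1, he2, vecMulVec_add_right]
  rw [add_mul, one_mul, mul_add, mul_one, key, hd, zero_smul, add_zero]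
  abel

lemma TE_add_left {v v' w : Fin n → R} (h1 : TE n R v w) (h2 : TE n R v' w)
    (hd : w ⬝ᵥ v' = 0) : TE n R (v + v') w := by
  obtain ⟨g1, hg1, he1⟩ := h1
  obtain ⟨g2, hg2, he2⟩ := h2
  refine ⟨g1 * g2, mul_mem hg1 hg2, ?_⟩
  push_cast
  rw [he1, he2, vecMulVec_add_left]
  rw [add_mul, one_mul, mul_add, mul_one, key, hd, zero_smul, add_zero]
  abel

lemma TE_sum_right {ι : Type} [DecidableEq ι] (v : Fin n → R) (f : ι → Fin n → R)
    (hd : ∀ k, f k ⬝ᵥ v = 0) (h : ∀ k, TE n R v (f k)) (s : Finset ι) :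
    TE n R v (∑ k ∈ s, f k) := by
  induction s using Finset.induction with
  | empty => simpa using TE_zero_right v
  | insert _ _ hk ih =>
      rw [Finset.sum_insert hk]
      exact TE_add_right (h _) ih (hd _)

lemma TE_sum_left {ι : Type} [DecidableEq ι] (w : Fin n → R) (f : ι → Fin n → R)
    (hd : ∀ k, w ⬝ᵥ f k = 0) (h : ∀ k, TE n R (f k) w) (s : Finset ι) :
    TE n R (∑ k ∈ s, f k) w := by
  induction s using Finset.induction with
  | empty => simpa using TE_zero_left w
  | insert _ _ hk ih =>
      rw [Finset.sum_insert hk]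
      refine TE_add_left (h _) ih ?_
      rw [dot_sum_right]
      exact Finset.sum_eq_zero fun k _ => hd k

/-- row case: `1 + (c e_k) wᵀ ∈ E_n` when `w k = 0`. -/
lemma TE_single_left (k : Fin n) (c : R) (u : Fin n → R) (hu : u k = 0) :
    TE n R (Pi.single k c) u := by
  have main : ∀ s : Finset (Fin n), k ∉ s →
      ∃ g ∈ En n R, (g : Matrix (Fin n) (Fin n) R)
        = 1 + ∑ j ∈ s, Matrix.single k j (c * u j) := by
    intro s
    induction s using Finset.induction with
    | empty => exact fun _ => ⟨1, one_mem _, by simp⟩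
    | @insert j s hj ih =>
        intro hks
        have hkj : k ≠ j := fun h => hks (by simp [h])
        have hks' : k ∉ s := fun h => hks (Finset.mem_insert_of_mem h)
        obtain ⟨g, hg, he⟩ := ih hks'
        have hE2 : Matrix.single k j (c * u j) * Matrix.single k j (-(c * u j))
            = 0 := Matrix.single_mul_single_of_ne _ _ _ _ (Ne.symm hkj) _
        refine ⟨⟨1 + Matrix.single k j (c * u j),
                 1 + Matrix.single k j (-(c * u j)), ?_, ?_⟩ * g,
                mul_mem (Subgroup.subset_closure ⟨k, j, hkj, c * u j, rfl⟩) hg, ?_⟩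
        · rw [add_mul, one_mul, mul_add, mul_one, hE2, add_zero, add_assoc,
            ← Matrix.single_add]
          simp
        · rw [add_mul, one_mul, mul_add, mul_one,
            Matrix.single_mul_single_of_ne _ _ _ _ (Ne.symm hkj), add_zero, add_assoc,
            ← Matrix.single_add]
          simp
        · push_cast
          rw [he, Finset.sum_insert hj, mul_add, mul_one, add_mul, one_mul, Finset.mul_sum]
          have : ∀ l ∈ s, Matrix.single k j (c * u j)
              * Matrix.single k l (c * u l) = 0 := fun l _ =>
            Matrix.single_mul_single_of_ne _ _ _ _ (Ne.symm hkj) _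
          rw [Finset.sum_congr rfl this, Finset.sum_const_zero, add_zero]
          abel
  obtain ⟨g, hg, he⟩ := main (Finset.univ.erase k) (Finset.notMem_erase k _)
  refine ⟨g, hg, ?_⟩
  rw [he]
  congr 1
  ext i j
  rw [Matrix.sum_apply]
  by_cases hik : k = i
  · subst hik
    by_cases hjk : j = k
    · subst hjk
      rw [Finset.sum_eq_zero (fun l hl => Matrix.single_apply_of_ne _ _ _ _ _
        (fun h => (Finset.mem_erase.mp hl).1 h.2))]
      simp [vecMulVec_apply, hu]
    · rw [Finset.sum_eq_single_of_mem j (Finset.mem_erase.mpr ⟨hjk, Finset.mem_univ j⟩)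
        (fun l _ hlj => Matrix.single_apply_of_ne _ _ _ _ _ (fun h => hlj h.2)),
        Matrix.single_apply_same]
      simp [vecMulVec_apply]
  · rw [Finset.sum_eq_zero (fun l _ => Matrix.single_apply_of_ne _ _ _ _ _
      (fun h => hik h.1))]
    simp [vecMulVec_apply, Pi.single_apply, Ne.symm hik]

lemma En_transpose {g : (Matrix (Fin n) (Fin n) R)ˣ} (hg : g ∈ En n R) :
    ∃ g' ∈ En n R, (g' : Matrix (Fin n) (Fin n) R) = (g : Matrix (Fin n) (Fin n) R)ᵀ := by
  induction hg using Subgroup.closure_induction with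
  | mem x hx =>
      obtain ⟨i, j, hij, c, hval⟩ := hx
      have hE2 : Matrix.single j i c * Matrix.single j i (-c) = 0 :=
        Matrix.single_mul_single_of_ne _ _ _ _ hij _
      refine ⟨⟨1 + Matrix.single j i c, 1 + Matrix.single j i (-c), ?_, ?_⟩,
        Subgroup.subset_closure ⟨j, i, hij.symm, c, rfl⟩, ?_⟩
      · rw [add_mul, one_mul, mul_add, mul_one, hE2, add_zero, add_assoc,
          ← Matrix.single_add]
        simp
      · rw [add_mul, one_mul, mul_add, mul_one,
          Matrix.single_mul_single_of_ne _ _ _ _ hij, add_zero, add_assoc,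
          ← Matrix.single_add]
        simp
      · rw [hval, transpose_add, transpose_one]
        ext a b
        simp only [Matrix.add_apply, transpose_apply, Matrix.single, Matrix.of_apply]
        exact congrArg _ (if_congr and_comm rfl rfl)
  | one => exact ⟨1, one_mem _, by simp⟩
  | mul x y hx hy ihx ihy =>
      obtain ⟨gx, hgx, hex⟩ := ihx
      obtain ⟨gy, hgy, hey⟩ := ihy
      exact ⟨gy * gx, mul_mem hgy hgx, by push_cast; rw [hey, hex, ← transpose_mul]⟩
  | inv x hx ihx =>
      obtain ⟨gx, hgx, hex⟩ := ihx
      refine ⟨gx⁻¹, inv_mem hgx, ?_⟩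
      have h1 : ((x⁻¹ : (Matrix (Fin n) (Fin n) R)ˣ) : Matrix (Fin n) (Fin n) R)ᵀ
          * ((x : Matrix (Fin n) (Fin n) R))ᵀ = 1 := by
        rw [← transpose_mul, Units.mul_inv, transpose_one]
      calc ((gx⁻¹ : (Matrix (Fin n) (Fin n) R)ˣ) : Matrix (Fin n) (Fin n) R)
          = ↑gx⁻¹ * (↑x : Matrix (Fin n) (Fin n) R)ᵀ * (↑x⁻¹ : Matrix (Fin n) (Fin n) R)ᵀ := by
            rw [mul_assoc, ← transpose_mul, Units.inv_mul, transpose_one, mul_one]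
        _ = ↑gx⁻¹ * ↑gx * (↑x⁻¹ : Matrix (Fin n) (Fin n) R)ᵀ := by rw [hex]
        _ = (↑x⁻¹ : Matrix (Fin n) (Fin n) R)ᵀ := by
            rw [← Units.val_mul, inv_mul_cancel, Units.val_one, one_mul]

lemma TE_symm {v w : Fin n → R} (h : TE n R v w) : TE n R w v := by
  obtain ⟨g, hg, he⟩ := h
  obtain ⟨g', hg', he'⟩ := En_transpose hg
  refine ⟨g', hg', ?_⟩
  rw [he', he, transpose_add, transpose_one]
  congr 1
  ext i j
  simp [vecMulVec_apply, transpose_apply, mul_comm]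

end TransvAux

namespace TransvAux

variable {n : ℕ} {R : Type} [CommRing R]

lemma TE_of_common_zero (r : Fin n) (v w : Fin n → R) (hv : v r = 0) (hw : w r = 0)
    (hwv : w ⬝ᵥ v = 0) : TE n R v w := by
  obtain ⟨ga, hga, hea⟩ := TE_symm (TE_single_left r (1:R) v hv)
  obtain ⟨gb, hgb, heb⟩ := TE_single_left r (1:R) w hw
  set A := vecMulVec v (Pi.single r (1:R)) with hA
  set B := vecMulVec (Pi.single r (1:R)) w with hB
  set K := vecMulVec v w with hK
  have hsr : (Pi.single r (1:R)) ⬝ᵥ v = 0 := by rw [single_dotProduct, one_mul, hv]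
  have hws : w ⬝ᵥ (Pi.single r (1:R)) = 0 := by rw [dotProduct_single, mul_one, hw]
  have hss : (Pi.single r (1:R)) ⬝ᵥ (Pi.single r (1:R)) = 1 := by
    rw [single_dotProduct, one_mul, Pi.single_eq_same]
  have hAA : A * A = 0 := by rw [hA, key, hsr, zero_smul]
  have hBB : B * B = 0 := by rw [hB, key, hws, zero_smul]
  have hAB : A * B = K := by rw [hA, hB, hK, key, hss, one_smul]
  have hBA : B * A = 0 := by rw [hA, hB, key, hwv, zero_smul]
  have hKA : K * A = 0 := by rw [hK, hA, key, hwv, zero_smul]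
  have hKB : K * B = 0 := by rw [hK, hB, key, hws, zero_smul]
  have hKmul : (1 + A + B + K) * (1 - A - B + K) = 1 + K := by
    have eA : (1 + A + B + K) * A = A := by
      rw [add_mul, add_mul, add_mul, one_mul, hAA, hBA, hKA]; abel
    have eB : (1 + A + B + K) * B = B + K := by
      rw [add_mul, add_mul, add_mul, one_mul, hAB, hBB, hKB]; abel
    have eK : (1 + A + B + K) * K = K := by
      have hAK : A * K = 0 := by rw [hK, hA, key, hsr, zero_smul]
      have hBK : B * K = 0 := by rw [hK, hB, key, hwv, zero_smul]
      have hKK : K * K = 0 := by rw [hK, key, hwv, zero_smul]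
      rw [add_mul, add_mul, add_mul, one_mul, hAK, hBK, hKK]; abel
    calc (1 + A + B + K) * (1 - A - B + K)
        = (1 + A + B + K) * 1 - (1 + A + B + K) * A - (1 + A + B + K) * B
            + (1 + A + B + K) * K := by
          rw [mul_add, mul_sub, mul_sub]
      _ = (1 + A + B + K) - A - (B + K) + K := by rw [mul_one, eA, eB, eK]
      _ = 1 + K := by abel
  have hainv : ((ga⁻¹ : (Matrix (Fin n) (Fin n) R)ˣ) : Matrix (Fin n) (Fin n) R) = 1 - A := by
    have h1 : ((ga : Matrix (Fin n) (Fin n) R)) * (1 - A) = 1 := by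
      rw [hea, add_mul, one_mul, mul_sub, mul_one, hAA]; abel
    calc ((ga⁻¹ : (Matrix (Fin n) (Fin n) R)ˣ) : Matrix (Fin n) (Fin n) R)
        = ↑ga⁻¹ * (↑ga * (1 - A)) := by rw [h1, mul_one]
      _ = 1 - A := by rw [← mul_assoc, ← Units.val_mul, inv_mul_cancel, Units.val_one, one_mul]
  have hbinv : ((gb⁻¹ : (Matrix (Fin n) (Fin n) R)ˣ) : Matrix (Fin n) (Fin n) R) = 1 - B := by
    have h1 : ((gb : Matrix (Fin n) (Fin n) R)) * (1 - B) = 1 := by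
      rw [heb, add_mul, one_mul, mul_sub, mul_one, hBB]; abel
    calc ((gb⁻¹ : (Matrix (Fin n) (Fin n) R)ˣ) : Matrix (Fin n) (Fin n) R)
        = ↑gb⁻¹ * (↑gb * (1 - B)) := by rw [h1, mul_one]
      _ = 1 - B := by rw [← mul_assoc, ← Units.val_mul, inv_mul_cancel, Units.val_one, one_mul]
  refine ⟨ga * gb * ga⁻¹ * gb⁻¹,
    mul_mem (mul_mem (mul_mem hga hgb) (inv_mem hga)) (inv_mem hgb), ?_⟩
  rw [Units.val_mul, Units.val_mul, Units.val_mul, hea, heb, hainv, hbinv]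
  have e1 : ((1 : Matrix (Fin n) (Fin n) R) + A) * (1 + B) = 1 + A + B + K := by
    rw [mul_add, mul_one, add_mul, one_mul, hAB]; abel
  rw [e1, mul_assoc]
  have e2 : ((1 : Matrix (Fin n) (Fin n) R) - A) * (1 - B) = 1 - A - B + K := by
    rw [mul_sub, mul_one, sub_mul, one_mul, hAB]; abel
  rw [e2, hKmul]

lemma TE_pair (hn : 3 ≤ n) (i j : Fin n) (hij : i ≠ j) (c : R) (v : Fin n → R) :
    TE n R v (Pi.single j (c * v i) - Pi.single i (c * v j)) := by
  set z : Fin n → R := Pi.single j (c * v i) - Pi.single i (c * v j) with hz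
  have hzi : z i = -(c * v j) := by
    rw [hz]; simp [Pi.single_apply, hij, Ne.symm hij]
  have hzj : z j = c * v i := by
    rw [hz]; simp [Pi.single_apply, hij, Ne.symm hij]
  have hz0 : ∀ l, l ≠ i → l ≠ j → z l = 0 := fun l hli hlj => by
    rw [hz]; simp [Pi.single_apply, hli, hlj]
  have hzv : z ⬝ᵥ v = 0 := by
    rw [hz, sub_dotProduct, single_dotProduct, single_dotProduct]; ring
  obtain ⟨r, hri, hrj⟩ : ∃ r : Fin n, r ≠ i ∧ r ≠ j := by
    by_contra h
    push_neg at h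
    have hsub : (Finset.univ : Finset (Fin n)) ⊆ {i, j} := fun r _ => by
      by_cases hri : r = i
      · simp [hri]
      · simp [h r hri]
    have h1 := Finset.card_le_card hsub
    have h2 : ({i, j} : Finset (Fin n)).card ≤ 2 :=
      (Finset.card_insert_le _ _).trans (by simp)
    rw [Finset.card_univ, Fintype.card_fin] at h1
    omega
  set vij : Fin n → R := Pi.single i (v i) + Pi.single j (v j) with hvij
  have hzvij : z ⬝ᵥ vij = 0 := by
    rw [hvij, dotProduct_add, dotProduct_single, dotProduct_single, hzi, hzj]; ring
  have hvijr : vij r = 0 := by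
    rw [hvij]; simp [Pi.single_apply, hri, hrj]
  have h1 : TE n R vij z := TE_of_common_zero r vij z hvijr (hz0 r hri hrj) hzvij
  set vrest : Fin n → R := v - vij with hvrest
  have hvrest_i : vrest i = 0 := by
    rw [hvrest, hvij]; simp [Pi.single_apply, hij, Ne.symm hij]
  have hvrest_j : vrest j = 0 := by
    rw [hvrest, hvij]; simp [Pi.single_apply, hij, Ne.symm hij]
  have h2 : TE n R vrest z := by
    have hsum : vrest = ∑ k : Fin n, Pi.single k (vrest k) :=
      (Finset.univ_sum_single vrest).symm
    rw [hsum]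
    refine TE_sum_left z (fun k => Pi.single k (vrest k)) ?_ ?_ Finset.univ
    · intro k
      rw [dotProduct_single]
      by_cases hki : k = i
      · rw [hki, hvrest_i, mul_zero]
      by_cases hkj : k = j
      · rw [hkj, hvrest_j, mul_zero]
      · rw [hz0 k hki hkj, zero_mul]
    · intro k
      by_cases hki : k = i
      · rw [hki, hvrest_i, Pi.single_zero]; exact TE_zero_left z
      by_cases hkj : k = j
      · rw [hkj, hvrest_j, Pi.single_zero]; exact TE_zero_left z
      · exact TE_single_left k (vrest k) z (hz0 k hki hkj)
  have hzvrest : z ⬝ᵥ vrest = 0 := by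
    rw [hvrest, dotProduct_sub, hzv, hzvij, sub_zero]
  have hvsplit : v = vij + vrest := by rw [hvrest]; abel
  rw [show TE n R v z = TE n R (vij + vrest) z from by rw [← hvsplit]]
  exact TE_add_left h1 h2 hzvrest

lemma TE_of_unimodular (hn : 3 ≤ n) (v w u : Fin n → R) (hu : u ⬝ᵥ v = 1)
    (hwv : w ⬝ᵥ v = 0) : TE n R v w := by
  set f : Fin n × Fin n → Fin n → R := fun p =>
    Pi.single p.2 ((u p.1 * w p.2) * v p.1) - Pi.single p.1 ((u p.1 * w p.2) * v p.2) with hf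
  have hdot : ∀ p, f p ⬝ᵥ v = 0 := by
    intro p
    rw [hf]
    simp only
    rw [sub_dotProduct, single_dotProduct, single_dotProduct]; ring
  have hTE : ∀ p, TE n R v (f p) := by
    intro p
    by_cases hp : p.1 = p.2
    · have hfp : f p = 0 := by
        rw [hf]; simp only; rw [hp, sub_self]
      rw [hfp]; exact TE_zero_right v
    · exact TE_pair hn p.1 p.2 hp (u p.1 * w p.2) v
  have hsum : ∑ p : Fin n × Fin n, f p = w := by
    funext l
    rw [Finset.sum_apply]
    simp only [hf, Pi.sub_apply]
    rw [Finset.sum_sub_distrib]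
    have hS1 : ∑ p : Fin n × Fin n, (Pi.single p.2 (u p.1 * w p.2 * v p.1) : Fin n → R) l = w l := by
      rw [Fintype.sum_prod_type]
      have inner : ∀ i, ∑ j, Pi.single j (u i * w j * v i) l = u i * w l * v i := by
        intro i
        rw [Finset.sum_congr rfl (fun j _ => Pi.single_apply j _ l), Finset.sum_ite_eq]
        simp
      rw [Finset.sum_congr rfl fun i _ => inner i]
      have : ∑ i, u i * w l * v i = (u ⬝ᵥ v) * w l := by
        rw [dotProduct, Finset.sum_mul]
        exact Finset.sum_congr rfl fun i _ => by ring
      rw [this, hu, one_mul]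
    have hS2 : ∑ p : Fin n × Fin n, (Pi.single p.1 (u p.1 * w p.2 * v p.2) : Fin n → R) l = 0 := by
      rw [Fintype.sum_prod_type]
      refine Finset.sum_eq_zero fun i _ => ?_
      rw [Finset.sum_congr rfl (fun j _ => Pi.single_apply i _ l)]
      by_cases hli : l = i
      · rw [Finset.sum_congr rfl (fun x _ => if_pos hli)]
        have : ∑ j, u i * w j * v j = u i * (w ⬝ᵥ v) := by
          rw [dotProduct, Finset.mul_sum]
          exact Finset.sum_congr rfl fun j _ => by ring
        rw [this, hwv, mul_zero]
      · simp [hli]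
    rw [hS1, hS2, sub_zero]
  rw [show TE n R v w = TE n R v (∑ p : Fin n × Fin n, f p) from by rw [hsum]]
  exact TE_sum_right v f hdot hTE Finset.univ

end TransvAux

/-- for a free module `P = R^n`, `n ≥ 3`, `p ∈ P` (with coordinate
vector `v`) and `φ ∈ P*` (represented by `w`) with `φ(p) = 0`, where `p` or `φ`
is unimodular, the transvection `1 + φ_p = I_n + v·wᵗ` lies in `E_n(R)`. -/
theorem free_transvection_elementary (n : ℕ) (hn : 3 ≤ n) (R : Type)
    [CommRing R] (v w : Fin n → R)
    (hphi : dotProduct w v = 0)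
    (huni : (∃ u : Fin n → R, ∑ i, u i * v i = 1) ∨
      (∃ u : Fin n → R, ∑ i, u i * w i = 1)) :
    ∃ g ∈ En n R,
      (g : Matrix (Fin n) (Fin n) R) = 1 + Matrix.vecMulVec v w := by
  rcases huni with ⟨u, hu⟩ | ⟨u, hu⟩
  · exact TransvAux.TE_of_unimodular hn v w u hu hphi
  · have h0 : v ⬝ᵥ w = 0 := by rwa [dotProduct_comm] at hphi
    exact TransvAux.TE_symm (TransvAux.TE_of_unimodular hn w v u hu h0)
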